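/- Let Φ be a Borel measure on Q_p \ {0} that is finite outside every neighbourhood of 0, let F be a probability distribution on Q_p, k(n) an increasing sequence of naturals, B_n ∈ Q_p with |B_n|_p → ∞, and define measures Φ_n(dy) = k(n) F(d(B_n y)) (pushforward of k(n)·F under multiplication by B_n^{-1}). If Φ_n → Φ weakly on each set {x : |x|_p > p^i}, i ∈ ℤ, then for every fixed t ∈ Q_p, ∫_{Q_p\{0}} (χ(ty) − 1) Φ_n(dy) → ∫_{Q_p\{0}} (χ(ty) − 1) Φ(dy), and hence the characteristic functions f_n(t) = (1 + (1/k(n)) ∫ (χ(ty) − 1) Φ_n(dy))^{k(n)} of the normalized sums S_n = B_n^{-1}(X₁ + ⋯ + X_{k(n)}) (X_j i.i.d. with distribution F) converge pointwise to exp(∫_{Q_p\{0}} (χ(ty) − 1) Φ(dy)). -/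

import Mathlib

open MeasureTheory Metric Filter Topology
open scoped ENNReal NNReal

noncomputable section

variable {p : ℕ} [Fact p.Prime]

instance : MeasurableSpace ℚ_[p] := borel _
instance : BorelSpace ℚ_[p] := ⟨rfl⟩

/-- The `p`-adic fractional part of `x : ℚ_[p]`: a rational of the form
`k / p^n`, `0 ≤ k < p^n`, with `‖x - {x}_p‖ ≤ 1`. -/
def padicFract (x : ℚ_[p]) : ℚ :=
  let n : ℕ := (-x.valuation).toNat
  (PadicInt.appr ⟨(p : ℚ_[p]) ^ n * x, by
      rcases eq_or_ne x 0 with h | h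
      · simp [h]
      · rw [norm_mul, Padic.norm_p_pow, Padic.norm_eq_zpow_neg_valuation h]
        rw [← Real.rpow_intCast, ← Real.rpow_intCast, ← Real.rpow_add
          (by exact_mod_cast (Fact.out : p.Prime).pos)]
        refine Real.rpow_le_one_of_one_le_of_nonpos
          (by exact_mod_cast (Fact.out : p.Prime).one_lt.le) ?_
        have h2 := Int.self_le_toNat (-x.valuation)
        push_cast
        exact_mod_cast (by omega :
          -(((-x.valuation).toNat : ℤ) : ℤ) + -x.valuation ≤ 0)⟩ n : ℚ)
    / (p : ℚ) ^ n

/-- The canonical additive character `χ(x) = exp(2πi {x}_p)` of `ℚ_[p]`. -/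
def padicChar (x : ℚ_[p]) : ℂ :=
  Complex.exp (2 * Real.pi * Complex.I * (padicFract x : ℂ))

/-- The characteristic function of a measure on `ℚ_[p]`. -/
def padicCharFun (μ : Measure ℚ_[p]) (t : ℚ_[p]) : ℂ :=
  ∫ x, padicChar (t * x) ∂μ

/-- The Haar measure on `ℚ_[p]` normalized so that the unit ball has measure 1. -/
def padicHaar : Measure ℚ_[p] :=
  Measure.addHaarMeasure
    ⟨⟨closedBall 0 1, isCompact_closedBall 0 1⟩, by
      refine ⟨0, ?_⟩
      rw [(IsUltrametricDist.isOpen_closedBall (0 : ℚ_[p]) one_ne_zero).interior_eq]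
      exact mem_closedBall_self zero_le_one⟩

lemma padicFract_den (x : ℚ_[p]) : ∃ (a n : ℕ), padicFract x = (a : ℚ) / (p : ℚ) ^ n :=
  ⟨_, _, rfl⟩

lemma padicFract_spec (x : ℚ_[p]) : ‖x - (padicFract x : ℚ_[p])‖ ≤ 1 := by
  have hp : (p : ℝ) > 0 := by exact_mod_cast (Fact.out : p.Prime).pos
  rw [padicFract]
  set n : ℕ := (-x.valuation).toNat with hn
  set z : ℤ_[p] := ⟨(p : ℚ_[p]) ^ n * x, by
      rcases eq_or_ne x 0 with h | h
      · simp [h]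
      · rw [norm_mul, Padic.norm_p_pow, Padic.norm_eq_zpow_neg_valuation h]
        rw [← Real.rpow_intCast, ← Real.rpow_intCast, ← Real.rpow_add
          (by exact_mod_cast (Fact.out : p.Prime).pos)]
        refine Real.rpow_le_one_of_one_le_of_nonpos
          (by exact_mod_cast (Fact.out : p.Prime).one_lt.le) ?_
        have h2 := Int.self_le_toNat (-x.valuation)
        push_cast
        exact_mod_cast (by omega :
          -(((-x.valuation).toNat : ℤ) : ℤ) + -x.valuation ≤ 0)⟩ with hz
  have happr : ‖(z : ℚ_[p]) - (PadicInt.appr z n : ℚ_[p])‖ ≤ (p : ℝ) ^ (-(n : ℤ)) := by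
    have := (PadicInt.norm_le_pow_iff_mem_span_pow (z - (PadicInt.appr z n : ℤ_[p])) n).mpr
      (PadicInt.appr_spec n z)
    calc ‖(z : ℚ_[p]) - (PadicInt.appr z n : ℚ_[p])‖
        = ‖z - (PadicInt.appr z n : ℤ_[p])‖ := by
          rw [← PadicInt.padic_norm_e_of_padicInt]; push_cast; ring_nf
      _ ≤ (p : ℝ) ^ (-(n : ℤ)) := this
  have hpz : (p : ℚ_[p]) ^ n ≠ 0 := by
    exact_mod_cast pow_ne_zero n (by exact_mod_cast (Fact.out : p.Prime).ne_zero)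
  have key : x - (((PadicInt.appr z n : ℚ) / (p : ℚ) ^ n : ℚ) : ℚ_[p])
      = ((z : ℚ_[p]) - (PadicInt.appr z n : ℚ_[p])) / (p : ℚ_[p]) ^ n := by
    have hzx : (z : ℚ_[p]) = (p : ℚ_[p]) ^ n * x := rfl
    rw [eq_div_iff hpz]
    push_cast
    rw [hzx]
    field_simp
  rw [key, norm_div]
  rw [show ‖(p : ℚ_[p]) ^ n‖ = (p : ℝ) ^ (-(n : ℤ)) by
    rw [norm_pow, Padic.norm_p, inv_pow, ← zpow_natCast, ← zpow_neg]]
  rw [div_le_one (by positivity)]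
  exact happr.trans (le_refl _)

lemma padicChar_congr {x y : ℚ_[p]} (h : ‖x - y‖ ≤ 1) : padicChar x = padicChar y := by
  obtain ⟨a, n, ha⟩ := padicFract_den x
  obtain ⟨b, m, hb⟩ := padicFract_den y
  have hp0 : (p : ℚ) ≠ 0 := by exact_mod_cast (Fact.out : p.Prime).ne_zero
  set d : ℚ := padicFract x - padicFract y with hd
  set c : ℤ := (a : ℤ) * p ^ m - (b : ℤ) * p ^ n with hc
  have hdc : d = (c : ℚ) / (p : ℚ) ^ (n + m) := by
    rw [hd, ha, hb, hc]
    field_simp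
    push_cast
    ring
  have hdnorm : ‖(d : ℚ_[p])‖ ≤ 1 := by
    have : (d : ℚ_[p]) = ((padicFract x : ℚ_[p]) - x) + (x - y) + (y - (padicFract y : ℚ_[p])) := by
      push_cast [hd]; ring
    rw [this]
    refine le_trans (Padic.nonarchimedean _ _) (max_le (le_trans
      (Padic.nonarchimedean _ _) (max_le ?_ h)) ?_)
    · rw [norm_sub_rev]; exact padicFract_spec x
    · exact padicFract_spec y
  have hcnorm : ‖(c : ℚ_[p])‖ ≤ (p : ℝ) ^ (-((n + m : ℕ) : ℤ)) := by
    have hce : (c : ℚ_[p]) = (d : ℚ_[p]) * (p : ℚ_[p]) ^ (n + m) := by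
      rw [hdc]; push_cast
      field_simp
      exact (mul_div_cancel_right₀ _ (pow_ne_zero _ (by exact_mod_cast (Fact.out : p.Prime).ne_zero))).symm
    rw [hce, norm_mul]
    have : ‖(p : ℚ_[p]) ^ (n + m)‖ = (p : ℝ) ^ (-((n + m : ℕ) : ℤ)) := by
      rw [norm_pow, Padic.norm_p, inv_pow, ← zpow_natCast, ← zpow_neg]
    rw [this]
    nlinarith [norm_nonneg ((p : ℚ_[p]) ^ (n + m)), this ▸ norm_nonneg ((p : ℚ_[p]) ^ (n + m)),
      hdnorm]
  obtain ⟨e, he⟩ := (Padic.norm_int_le_pow_iff_dvd c (n + m)).mp hcnorm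
  have hde : d = (e : ℚ) := by
    rw [hdc, he]; push_cast; field_simp
  have hfx : (padicFract x : ℚ) = padicFract y + (e : ℚ) := by
    rw [← hde, hd]; ring
  rw [padicChar, padicChar, hfx]
  push_cast
  rw [mul_add, Complex.exp_add, show (2 : ℂ) * Real.pi * Complex.I * (e : ℂ)
    = (e : ℤ) * (2 * Real.pi * Complex.I) by push_cast; ring,
    Complex.exp_int_mul_two_pi_mul_I, mul_one]

lemma padicChar_zero : padicChar (0 : ℚ_[p]) = 1 := by
  have : padicFract (0 : ℚ_[p]) = 0 := by
    simp [padicFract, Padic.valuation_zero, PadicInt.appr]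
  simp [padicChar, this]

lemma padicChar_eq_one {x : ℚ_[p]} (h : ‖x‖ ≤ 1) : padicChar x = 1 := by
  rw [padicChar_congr (by simpa using h : ‖x - 0‖ ≤ 1), padicChar_zero]

lemma continuous_padicChar : Continuous (padicChar (p := p)) := by
  rw [continuous_iff_continuousAt]
  intro x
  have : padicChar (p := p) =ᶠ[𝓝 x] fun _ => padicChar x := by
    filter_upwards [closedBall_mem_nhds x one_pos] with y hy
    exact padicChar_congr (by rwa [← dist_eq_norm, ← mem_closedBall])
  exact this.continuousAt

lemma abs_padicChar (x : ℚ_[p]) : ‖padicChar x‖ = 1 := by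
  rw [padicChar, Complex.norm_exp]
  norm_num [Complex.mul_re, Complex.mul_im]

lemma aux_log : Tendsto (fun u : ℂ => Complex.log (1 + u) / u) (𝓝[≠] 0) (𝓝 1) := by
  have hd : HasDerivAt (fun u : ℂ => Complex.log (1 + u)) 1 0 := by
    have h1 : HasDerivAt Complex.log ((1 : ℂ) + 0)⁻¹ ((1 : ℂ) + 0) :=
      Complex.hasDerivAt_log (by norm_num [Complex.slitPlane])
    simpa [Function.comp_def] using h1.comp 0 ((hasDerivAt_id (0 : ℂ)).const_add 1)
  have h := hasDerivAt_iff_tendsto_slope.mp hd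
  refine h.congr ?_
  intro u
  simp [slope_def_field]

lemma aux_g : Tendsto (fun u : ℂ => if u = 0 then 1 else Complex.log (1 + u) / u)
    (𝓝 0) (𝓝 1) := by
  rw [← nhdsNE_sup_pure (0 : ℂ), tendsto_sup]
  constructor
  · refine aux_log.congr' ?_
    filter_upwards [self_mem_nhdsWithin] with u hu
    simp only [Set.mem_compl_iff, Set.mem_singleton_iff] at hu
    simp [hu]
  · rw [tendsto_pure_left]
    intro s hs
    have : (1 : ℂ) ∈ s := mem_of_mem_nhds hs
    simpa using this

lemma tendsto_one_add_pow_exp {z : ℕ → ℂ} {w : ℂ} (hz : Tendsto z atTop (𝓝 w))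
    {k : ℕ → ℕ} (hk : Tendsto (fun n => (k n : ℝ)) atTop atTop) :
    Tendsto (fun n => (1 + (k n : ℂ)⁻¹ * z n) ^ (k n)) atTop (𝓝 (Complex.exp w)) := by
  set g : ℂ → ℂ := fun u => if u = 0 then 1 else Complex.log (1 + u) / u with hgdef
  have hw : Tendsto (fun n => (k n : ℂ)⁻¹ * z n) atTop (𝓝 0) := by
    have h1 : Tendsto (fun n => ((k n : ℝ) : ℂ)⁻¹) atTop (𝓝 ((0 : ℝ) : ℂ)) := by
      exact (Complex.continuous_ofReal.tendsto 0).comp (tendsto_inv_atTop_zero.comp hk)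
        |>.congr (fun n => by simp)
    simpa using (h1.mul hz).congr (fun n => by push_cast; ring)
  have hk0 : ∀ᶠ n in atTop, (1 : ℝ) ≤ (k n : ℝ) := hk.eventually_ge_atTop 1
  have hne : ∀ᶠ n in atTop, (1 : ℂ) + (k n : ℂ)⁻¹ * z n ≠ 0 := by
    filter_upwards [hw.eventually (Metric.ball_mem_nhds 0 one_pos)] with n hn h0
    rw [dist_zero_right] at hn
    rw [add_eq_zero_iff_neg_eq] at h0
    rw [← h0] at hn
    simp at hn
  have hmain : Tendsto (fun n => (k n : ℂ) * Complex.log (1 + (k n : ℂ)⁻¹ * z n))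
      atTop (𝓝 w) := by
    have h2 : Tendsto (fun n => z n * g ((k n : ℂ)⁻¹ * z n)) atTop (𝓝 (w * 1)) :=
      hz.mul (aux_g.comp hw)
    rw [mul_one] at h2
    refine h2.congr' ?_
    filter_upwards [hk0] with n hn
    have hkne : (k n : ℂ) ≠ 0 := by
      intro h; rw [Nat.cast_eq_zero] at h; simp [h] at hn; linarith
    by_cases hzn : (k n : ℂ)⁻¹ * z n = 0
    · have hz0 : z n = 0 := by
        rcases mul_eq_zero.mp hzn with h | h
        · exact absurd (inv_eq_zero.mp h) hkne
        · exact h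
      simp [hgdef, hzn, hz0]
    · have hzne : z n ≠ 0 := fun h => hzn (by simp [h])
      simp only [hgdef, if_neg hzn]
      field_simp
  have hcomp := (Complex.continuous_exp.tendsto w).comp hmain
  refine hcomp.congr' ?_
  filter_upwards [hne] with n hn
  simp only [Function.comp_apply]
  rw [Complex.exp_nat_mul, Complex.exp_log hn]

/-- Theorem 2 (sufficiency): if the measures `Φₙ(dy) = k(n) F(d(Bₙ y))` converge weakly to
`Φ` on each set `{|x| > p^i}`, then `∫ (χ(ty)-1) dΦₙ → ∫ (χ(ty)-1) dΦ` for every `t`, and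
the characteristic functions `fₙ(t) = (1 + k(n)⁻¹ ∫ (χ(ty)-1) dΦₙ)^{k(n)}` of the
normalized sums converge pointwise to `exp ∫ (χ(ty)-1) dΦ`. -/
theorem stmt_14 {p : ℕ} [Fact p.Prime] (Φ : Measure ℚ_[p]) (hΦ0 : Φ {0} = 0)
    (hΦfin : ∀ U ∈ 𝓝 (0 : ℚ_[p]), Φ Uᶜ < ⊤)
    (F : Measure ℚ_[p]) [IsProbabilityMeasure F]
    (k : ℕ → ℕ) (hk : StrictMono k)
    (B : ℕ → ℚ_[p]) (hB : Tendsto (fun n => ‖B n‖) atTop atTop)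
    (Φn : ℕ → Measure ℚ_[p])
    (hΦn : ∀ n, Φn n = (k n : ℝ≥0∞) • Measure.map (fun x => (B n)⁻¹ * x) F)
    (hweak : ∀ i : ℤ, ∀ h : BoundedContinuousFunction ℚ_[p] ℝ,
      Tendsto (fun n => ∫ x in {x : ℚ_[p] | (p : ℝ) ^ i < ‖x‖}, h x ∂(Φn n)) atTop
        (𝓝 (∫ x in {x : ℚ_[p] | (p : ℝ) ^ i < ‖x‖}, h x ∂Φ))) :
    (∀ t : ℚ_[p],
      Tendsto (fun n => ∫ y, (padicChar (t * y) - 1) ∂(Φn n)) atTop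
        (𝓝 (∫ y, (padicChar (t * y) - 1) ∂Φ))) ∧
    (∀ t : ℚ_[p],
      Tendsto (fun n =>
          (1 + (k n : ℂ)⁻¹ * ∫ y, (padicChar (t * y) - 1) ∂(Φn n)) ^ (k n)) atTop
        (𝓝 (Complex.exp (∫ y, (padicChar (t * y) - 1) ∂Φ)))) := by
  have hp1 : (1 : ℝ) < p := by exact_mod_cast (Fact.out : p.Prime).one_lt
  have hp0 : (0 : ℝ) < p := by linarith
  have key : ∀ t : ℚ_[p],
      Tendsto (fun n => ∫ y, (padicChar (t * y) - 1) ∂(Φn n)) atTop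
        (𝓝 (∫ y, (padicChar (t * y) - 1) ∂Φ)) := by
    intro t
    set f : ℚ_[p] → ℂ := fun y => padicChar (t * y) - 1 with hf
    set i : ℤ := t.valuation with hi
    set S : Set ℚ_[p] := {x | (p : ℝ) ^ i < ‖x‖} with hS
    -- the integrand vanishes off S
    have hvanish : ∀ y ∉ S, f y = 0 := by
      intro y hy
      simp only [hS, Set.mem_setOf_eq, not_lt] at hy
      have hnorm : ‖t * y‖ ≤ 1 := by
        rcases eq_or_ne t 0 with h | h
        · simp [h]
        · rw [norm_mul, Padic.norm_eq_zpow_neg_valuation h]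
          calc (p : ℝ) ^ (-t.valuation) * ‖y‖ ≤ (p : ℝ) ^ (-i) * (p : ℝ) ^ i := by
                exact mul_le_mul_of_nonneg_left hy (by positivity)
            _ = 1 := by
                rw [← zpow_add₀ (ne_of_gt hp0)]; simp
      simp [hf, padicChar_eq_one hnorm]
    have hC : Continuous f :=
      (continuous_padicChar.comp (continuous_const.mul continuous_id)).sub continuous_const
    have hbd : ∀ y, ‖f y‖ ≤ 2 := by
      intro y
      calc ‖f y‖ ≤ ‖padicChar (t * y)‖ + ‖(1 : ℂ)‖ := norm_sub_le _ _
        _ = 2 := by rw [abs_padicChar]; norm_num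
    -- bounded continuous real and imaginary parts
    set fRe : BoundedContinuousFunction ℚ_[p] ℝ :=
      BoundedContinuousFunction.ofNormedAddCommGroup (fun y => (f y).re)
        (Complex.continuous_re.comp hC) 2
        (fun y => by
          rw [Real.norm_eq_abs]
          exact (Complex.abs_re_le_norm _).trans (hbd y)) with hfRe
    set fIm : BoundedContinuousFunction ℚ_[p] ℝ :=
      BoundedContinuousFunction.ofNormedAddCommGroup (fun y => (f y).im)
        (Complex.continuous_im.comp hC) 2
        (fun y => by
          rw [Real.norm_eq_abs]
          exact (Complex.abs_im_le_norm _).trans (hbd y)) with hfIm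
    -- finiteness of the restricted measures
    have hΦS : Φ S < ⊤ := by
      have hU : {x : ℚ_[p] | ‖x‖ ≤ (p : ℝ) ^ i} ∈ 𝓝 (0 : ℚ_[p]) := by
        have h1 : Metric.closedBall (0 : ℚ_[p]) ((p : ℝ) ^ i) ∈ 𝓝 0 :=
          Metric.closedBall_mem_nhds 0 (by positivity)
        convert h1 using 1
        ext x
        simp [Metric.mem_closedBall, dist_zero_right]
      have h2 := hΦfin _ hU
      have h3 : {x : ℚ_[p] | ‖x‖ ≤ (p : ℝ) ^ i}ᶜ = S := by
        ext x; simp [hS, not_le]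
      rwa [h3] at h2
    haveI : IsFiniteMeasure (Φ.restrict S) :=
      ⟨by rw [Measure.restrict_apply_univ]; exact hΦS⟩
    have hfinn : ∀ n, IsFiniteMeasure (Φn n) := by
      intro n
      rw [hΦn n]
      have hmeas : Measurable (fun x : ℚ_[p] => (B n)⁻¹ * x) :=
        (continuous_const.mul continuous_id).measurable
      constructor
      rw [Measure.smul_apply, Measure.map_apply hmeas MeasurableSet.univ]
      simp [measure_univ]
    -- representation of the full integral as an integral over S
    have hrep : ∀ (μ : Measure ℚ_[p]), IsFiniteMeasure (μ.restrict S) →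
        ∫ y, f y ∂μ = ((∫ y in S, fRe y ∂μ : ℝ) : ℂ) + ((∫ y in S, fIm y ∂μ : ℝ)) * Complex.I := by
      intro μ hμ
      have hint : Integrable f (μ.restrict S) :=
        (BoundedContinuousFunction.ofNormedAddCommGroup f hC 2 hbd).integrable _
      rw [← setIntegral_eq_integral_of_forall_compl_eq_zero hvanish (μ := μ)]
      rw [← integral_re_add_im hint]
      rfl
    -- put everything together
    rw [hrep Φ inferInstance]
    have hRe := hweak i fRe
    have hIm := hweak i fIm
    have hlim : Tendsto (fun n => ((∫ y in S, fRe y ∂(Φn n) : ℝ) : ℂ)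
        + ((∫ y in S, fIm y ∂(Φn n) : ℝ)) * Complex.I) atTop
        (𝓝 (((∫ y in S, fRe y ∂Φ : ℝ) : ℂ) + ((∫ y in S, fIm y ∂Φ : ℝ)) * Complex.I)) :=
      (((Complex.continuous_ofReal.tendsto _).comp hRe).add
        (((Complex.continuous_ofReal.tendsto _).comp hIm).mul_const Complex.I))
    refine hlim.congr ?_
    intro n
    haveI := hfinn n
    exact (hrep (Φn n) inferInstance).symm
  refine ⟨key, fun t => ?_⟩
  exact tendsto_one_add_pow_exp (key t)
    (tendsto_natCast_atTop_atTop.comp hk.tendsto_atTop)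

end
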